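/- The limit h(ζ) = lim_{n→∞} (∑_{j=0}^{n-1} 1/(ζ+j) − log((ζ+n)/ζ)) satisfies: there exists C > 0 such that |h(ζ)| ≤ C/|ζ| for all ζ with Re ζ > 0. -/

import Mathlib

open Filter Complex

private lemma re_pos_ne_zero {z : ℂ} (hz : 0 < z.re) : z ≠ 0 := by
  intro h; rw [h] at hz; simp at hz

private lemma abs_log_le {w : ℂ} (hw : 0 < w.re) :
    ‖Complex.log (1 + w)‖ ≤ ‖w‖ + Real.pi / 2 := by
  have hre : (1 : ℝ) ≤ (1 + w).re := by simp [hw.le]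
  have habs : (1 : ℝ) ≤ ‖1 + w‖ :=
    le_trans hre (Complex.re_le_norm _)
  have harg : |Complex.arg (1 + w)| < Real.pi / 2 := by
    rw [Complex.abs_arg_lt_pi_div_two_iff]
    left; linarith
  calc ‖Complex.log (1 + w)‖
      ≤ |(Complex.log (1 + w)).re| + |(Complex.log (1 + w)).im| :=
        Complex.norm_le_abs_re_add_abs_im _
    _ ≤ ‖w‖ + Real.pi / 2 := by
        rw [Complex.log_re, Complex.log_im]
        have h1 : |Real.log (‖1 + w‖)| = Real.log (‖1 + w‖) :=
          abs_of_nonneg (Real.log_nonneg habs)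
        have h2 : Real.log (‖1 + w‖) ≤ ‖1 + w‖ - 1 :=
          Real.log_le_sub_one_of_pos (by linarith)
        have h3 : ‖1 + w‖ ≤ 1 + ‖w‖ := by
          calc ‖1 + w‖ ≤ ‖1‖ + ‖w‖ := norm_add_le _ _
            _ = 1 + ‖w‖ := by simp
        rw [h1]
        linarith [harg.le]

private lemma key_bound_lin {w : ℂ} (hw : 0 < w.re) :
    ‖w - Complex.log (1 + w)‖ ≤ 6 * ‖w‖ := by
  rcases le_or_gt (‖w‖) (1/2) with hsmall | hbig
  · have h1 : ‖w‖ < 1 := by linarith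
    have h2 := Complex.norm_log_one_add_sub_self_le h1
    have h3 : ‖w - Complex.log (1 + w)‖ = ‖Complex.log (1 + w) - w‖ :=
      norm_sub_rev _ _
    have h4 : (1 - ‖w‖)⁻¹ ≤ 2 := by
      rw [inv_le_comm₀ (by linarith) (by norm_num)]
      linarith
    have h5 : ‖w‖ ^ 2 * (1 - ‖w‖)⁻¹ / 2 ≤ ‖w‖ ^ 2 := by
      nlinarith [sq_nonneg (‖w‖)]
    have h6 : ‖w‖ ^ 2 ≤ 6 * ‖w‖ := by
      nlinarith [norm_nonneg w]
    rw [h3]; linarith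
  · have h1 := abs_log_le hw
    have h2 : ‖w - Complex.log (1 + w)‖ ≤
        ‖w‖ + ‖Complex.log (1 + w)‖ := norm_sub_le _ _
    have hpi : Real.pi / 2 ≤ 4 * ‖w‖ := by
      have := Real.pi_lt_d2
      nlinarith
    linarith

private lemma key_bound_sq {w : ℂ} (hw : 0 < w.re) :
    ‖w - Complex.log (1 + w)‖ ≤ 12 * ‖w‖ ^ 2 := by
  rcases le_or_gt (‖w‖) (1/2) with hsmall | hbig
  · have h1 : ‖w‖ < 1 := by linarith
    have h2 := Complex.norm_log_one_add_sub_self_le h1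
    have h3 : ‖w - Complex.log (1 + w)‖ = ‖Complex.log (1 + w) - w‖ :=
      norm_sub_rev _ _
    have h4 : (1 - ‖w‖)⁻¹ ≤ 2 := by
      rw [inv_le_comm₀ (by linarith) (by norm_num)]
      linarith
    have h5 : ‖w‖ ^ 2 * (1 - ‖w‖)⁻¹ / 2 ≤ ‖w‖ ^ 2 := by
      nlinarith [sq_nonneg (‖w‖)]
    rw [h3]; nlinarith [sq_nonneg (‖w‖)]
  · have := key_bound_lin hw
    nlinarith

private lemma shift_re_pos {ζ : ℂ} (hζ : 0 < ζ.re) (j : ℕ) : 0 < (ζ + (j : ℂ)).re := by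
  simp only [Complex.add_re, Complex.natCast_re]
  positivity

private lemma inv_shift_re_pos {ζ : ℂ} (hζ : 0 < ζ.re) (j : ℕ) :
    0 < ((1 : ℂ) / (ζ + (j : ℂ))).re := by
  rw [one_div, Complex.inv_re]
  have h1 := shift_re_pos hζ j
  have h2 : 0 < Complex.normSq (ζ + (j : ℂ)) := by
    rw [Complex.normSq_pos]; exact re_pos_ne_zero h1
  positivity

private lemma ratio_re_pos {ζ : ℂ} (hζ : 0 < ζ.re) (n : ℕ) :
    0 < ((ζ + (n : ℂ)) / ζ).re := by
  have hz : ζ ≠ 0 := re_pos_ne_zero hζ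
  have heq : (ζ + (n : ℂ)) / ζ = 1 + (n : ℂ) * ζ⁻¹ := by field_simp
  rw [heq]
  simp only [Complex.add_re, Complex.one_re, Complex.mul_re, Complex.natCast_re,
    Complex.natCast_im, Complex.inv_re, Complex.inv_im, zero_mul, sub_zero]
  have h2 : 0 < Complex.normSq ζ := by rw [Complex.normSq_pos]; exact hz
  have : 0 ≤ (n : ℝ) * (ζ.re / Complex.normSq ζ) := by positivity
  linarith

private lemma log_telescope {ζ : ℂ} (hζ : 0 < ζ.re) (n : ℕ) :
    Complex.log ((ζ + (n : ℂ)) / ζ) =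
      ∑ j ∈ Finset.range n, Complex.log (1 + 1 / (ζ + (j : ℂ))) := by
  induction n with
  | zero => simp [div_self (re_pos_ne_zero hζ)]
  | succ m ih =>
    rw [Finset.sum_range_succ, ← ih]
    have hm : (ζ + (m : ℂ)) ≠ 0 := re_pos_ne_zero (shift_re_pos hζ m)
    have hz : ζ ≠ 0 := re_pos_ne_zero hζ
    have heq : (ζ + ((m + 1 : ℕ) : ℂ)) / ζ = ((ζ + (m : ℂ)) / ζ) * (1 + 1 / (ζ + (m : ℂ))) := by
      push_cast
      field_simp
      ring
    rw [heq]
    have h1 : 0 < ((ζ + (m : ℂ)) / ζ).re := ratio_re_pos hζ m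
    have h2 : 0 < ((1 : ℂ) + 1 / (ζ + (m : ℂ))).re := by
      have := inv_shift_re_pos hζ m
      simp only [Complex.add_re, Complex.one_re]
      linarith
    have ha1 : |Complex.arg ((ζ + (m : ℂ)) / ζ)| < Real.pi / 2 := by
      rw [Complex.abs_arg_lt_pi_div_two_iff]; left; exact h1
    have ha2 : |Complex.arg ((1 : ℂ) + 1 / (ζ + (m : ℂ)))| < Real.pi / 2 := by
      rw [Complex.abs_arg_lt_pi_div_two_iff]; left; exact h2
    apply Complex.log_mul (div_ne_zero (re_pos_ne_zero (shift_re_pos hζ m)) hz)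
      (re_pos_ne_zero h2)
    constructor
    · cases abs_lt.mp ha1; cases abs_lt.mp ha2; linarith
    · cases abs_lt.mp ha1; cases abs_lt.mp ha2; linarith

/-- The limit `h(ζ)` of the shifted-harmonic/logarithm difference satisfies
`|h(ζ)| ≤ C/|ζ|` on the right half plane, for a uniform constant `C`. -/
theorem limit_harmonic_minus_log_is_O (h : ℂ → ℂ)
    (hlim : ∀ ζ : ℂ, 0 < ζ.re → Tendsto
      (fun n : ℕ => (∑ j ∈ Finset.range n, 1 / (ζ + j)) - Complex.log ((ζ + n) / ζ))
      atTop (nhds (h ζ))) :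
    ∃ C : ℝ, 0 < C ∧ ∀ ζ : ℂ, 0 < ζ.re →
      ‖h ζ‖ ≤ C / ‖ζ‖ := by
  refine ⟨30, by norm_num, fun ζ hζ => ?_⟩
  set a : ℝ := ‖ζ‖ with ha_def
  have ha : 0 < a := norm_pos_iff.mpr (re_pos_ne_zero hζ)
  set F : ℕ → ℂ := fun j => 1 / (ζ + (j : ℂ)) - Complex.log (1 + 1 / (ζ + (j : ℂ))) with hF
  -- single-term bounds
  have hF0 : ‖F 0‖ ≤ 6 / a := by
    have h0 : (ζ + ((0 : ℕ) : ℂ)) = ζ := by push_cast; ring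
    have hw : 0 < ((1 : ℂ) / ζ).re := by
      have := inv_shift_re_pos hζ 0
      rwa [h0] at this
    have := key_bound_lin hw
    have habs : ‖(1 : ℂ) / ζ‖ = 1 / a := by
      rw [norm_div, norm_one]
    rw [habs] at this
    simpa [hF, h0, div_eq_mul_inv, mul_comm] using this
  have hFj : ∀ j : ℕ, ‖F (j + 1)‖ ≤
      24 * (1 / (a + j) - 1 / (a + (j + 1))) := by
    intro j
    have hk : 0 < ((1 : ℂ) / (ζ + ((j + 1 : ℕ) : ℂ))).re := inv_shift_re_pos hζ (j + 1)
    have h1 := key_bound_sq hk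
    set b : ℝ := ‖ζ + ((j + 1 : ℕ) : ℂ)‖ with hb_def
    have hb : 0 < b := norm_pos_iff.mpr (re_pos_ne_zero (shift_re_pos hζ (j + 1)))
    have habs : ‖(1 : ℂ) / (ζ + ((j + 1 : ℕ) : ℂ))‖ = 1 / b := by
      rw [norm_div, norm_one]
    rw [habs] at h1
    have hb2 : a ^ 2 + ((j : ℝ) + 1) ^ 2 ≤ b ^ 2 := by
      have h2 : b ^ 2 = (ζ.re + ((j : ℝ) + 1)) ^ 2 + ζ.im ^ 2 := by
        rw [hb_def, Complex.sq_norm, Complex.normSq_apply]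
        push_cast
        simp [Complex.add_re, Complex.add_im]
        ring
      have h3 : a ^ 2 = ζ.re ^ 2 + ζ.im ^ 2 := by
        rw [ha_def, Complex.sq_norm, Complex.normSq_apply]; ring
      nlinarith [mul_nonneg hζ.le (by positivity : (0:ℝ) ≤ (j:ℝ) + 1)]
    have hja : 0 < a + (j : ℝ) := by positivity
    have hja1 : 0 < a + ((j : ℝ) + 1) := by positivity
    have hrw : 1 / (a + (j : ℝ)) - 1 / (a + ((j : ℝ) + 1)) =
        1 / ((a + (j : ℝ)) * (a + ((j : ℝ) + 1))) := by
      field_simp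
      ring
    have hineq : 12 * (1 / b) ^ 2 ≤ 24 * (1 / ((a + (j : ℝ)) * (a + ((j : ℝ) + 1)))) := by
      rw [div_pow, one_pow, mul_one_div, mul_one_div]
      rw [div_le_div_iff₀ (by positivity) (by positivity)]
      nlinarith [sq_nonneg (a - ((j : ℝ) + 1)), hb.le]
    calc ‖F (j + 1)‖ ≤ 12 * (1 / b) ^ 2 := h1
      _ ≤ 24 * (1 / ((a + (j : ℝ)) * (a + ((j : ℝ) + 1)))) := hineq
      _ = 24 * (1 / (a + (j : ℝ)) - 1 / (a + ((j : ℝ) + 1))) := by rw [hrw]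
  -- bound each partial sum
  have key : ∀ n : ℕ, ‖(∑ j ∈ Finset.range n, 1 / (ζ + (j : ℂ))) - Complex.log ((ζ + (n : ℂ)) / ζ)‖ ≤ 30 / a := by
    intro n
    rw [log_telescope hζ n, ← Finset.sum_sub_distrib]
    have hsum : ‖∑ j ∈ Finset.range n, F j‖ ≤ ∑ j ∈ Finset.range n, ‖F j‖ :=
      norm_sum_le _ _
    have hsum2 : ∑ j ∈ Finset.range n, ‖F j‖ ≤ 30 / a := by
      cases n with
      | zero => simp; positivity
      | succ m =>
        rw [Finset.sum_range_succ']
        have htel : ∑ j ∈ Finset.range m, ‖F (j + 1)‖ ≤ 24 / a := by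
          calc ∑ j ∈ Finset.range m, ‖F (j + 1)‖
              ≤ ∑ j ∈ Finset.range m, 24 * (1 / (a + (j : ℝ)) - 1 / (a + ((j : ℝ) + 1))) :=
                Finset.sum_le_sum fun j _ => hFj j
            _ = 24 * (1 / (a + (0 : ℝ)) - 1 / (a + (m : ℝ))) := by
                rw [← Finset.mul_sum]
                congr 1
                have htel := Finset.sum_range_sub' (f := fun j : ℕ => 1 / (a + (j : ℝ))) m
                push_cast at htel
                exact htel
            _ ≤ 24 / a := by
                have h2 : 0 ≤ 24 * (1 / (a + (m : ℝ))) := by positivity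
                have h3 : 24 * (1 / a) = 24 / a := by ring
                rw [add_zero, mul_sub]
                linarith
        have h30 : (24 : ℝ) / a + 6 / a = 30 / a := by ring
        linarith
    exact le_trans hsum hsum2
  -- pass to the limit
  have htend : Tendsto (fun n : ℕ => ‖(∑ j ∈ Finset.range n, 1 / (ζ + (j : ℂ))) - Complex.log ((ζ + (n : ℂ)) / ζ)‖)
      atTop (nhds (‖h ζ‖)) :=
    (continuous_norm.tendsto _).comp (hlim ζ hζ)
  exact le_of_tendsto htend (Eventually.of_forall key)
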